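/- Define the sequence λₙ by λ₀² = p₁² + 4τ(τ−1), λ₁² = p₁² + p₂² + 4τ(τ−1), and λₙ² = 4τ(τ−1) + p_{n+1}² + pₙ² − pₙ²p_{n−1}²/λ_{n−2}² for n ≥ 2, where τ > 1 and 0 < pₙ with pₙ² ≤ 1/4 for all n (so that the Jacobi matrix with zero diagonal and off-diagonals pₙ has norm ≤ 1). Then λₙ² ≥ 4τ(τ−1) > 0 for all n, so the recursion is well defined. -/
import Mathlib


/-- Define `λₙ` by `λ₀² = p₁² + 4τ(τ−1)`, `λ₁² = p₁² + p₂² + 4τ(τ−1)`, and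
`λₙ² = 4τ(τ−1) + p_{n+1}² + pₙ² − pₙ²p_{n−1}²/λ_{n−2}²` for `n ≥ 2`, where `τ > 1` and
the `pₙ > 0` satisfy `pₙ² + p_{n+1}² ≤ 1` (so the corresponding zero-diagonal Jacobi
matrix has norm ≤ 1). Then `λₙ² ≥ 4τ(τ−1) > 0` for all `n`, so the recursion is
well defined. -/
theorem lambda_recursion_bounded_below (τ : ℝ) (hτ : 1 < τ)
    (p : ℕ → ℝ) (hp : ∀ n, 0 < p n) (hpnorm : ∀ n, p n ^ 2 + p (n + 1) ^ 2 ≤ 1)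
    (lam : ℕ → ℝ) (hlampos : ∀ n, 0 < lam n)
    (h0 : lam 0 ^ 2 = p 1 ^ 2 + 4 * τ * (τ - 1))
    (h1 : lam 1 ^ 2 = p 1 ^ 2 + p 2 ^ 2 + 4 * τ * (τ - 1))
    (hrec : ∀ n, 2 ≤ n →
      lam n ^ 2 = 4 * τ * (τ - 1) + p (n + 1) ^ 2 + p n ^ 2
        - p n ^ 2 * p (n - 1) ^ 2 / lam (n - 2) ^ 2) :
    (0 < 4 * τ * (τ - 1)) ∧ ∀ n, 4 * τ * (τ - 1) ≤ lam n ^ 2 := by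
  have hc : 0 < 4 * τ * (τ - 1) := by nlinarith
  have key : ∀ n, 4 * τ * (τ - 1) + p (n + 1) ^ 2 ≤ lam n ^ 2 := by
    intro n
    induction n using Nat.strong_induction_on with
    | _ n ih =>
      match n with
      | 0 => rw [h0]; linarith
      | 1 =>
        rw [h1]
        have := sq_nonneg (p 1); linarith
      | (m + 2) =>
        have h := hrec (m + 2) (by omega)
        simp only [Nat.add_sub_cancel] at h
        have hprev := ih m (by omega)
        have hpm := sq_nonneg (p (m + 1))
        have hlp : (0:ℝ) < lam m ^ 2 := pow_pos (hlampos m) 2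
        have hdiv : p (m + 2) ^ 2 * p (m + 1) ^ 2 / lam m ^ 2 ≤ p (m + 2) ^ 2 := by
          rw [div_le_iff₀ hlp]
          nlinarith [sq_nonneg (p (m + 2)), sq_nonneg (p (m + 1))]
        have : (m + 2 : ℕ) - 1 = m + 1 := by omega
        rw [this] at h
        rw [h]
        have hp3 := sq_nonneg (p (m + 3))
        linarith
  exact ⟨hc, fun n => le_trans (by nlinarith [sq_nonneg (p (n + 1))]) (key n)⟩
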